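/- Strict efficiency gain: let M_RE be a k×k positive definite real matrix, ρ ∈ (0,1], M a (k+l)×(k+l) positive definite real symmetric matrix with Q := M − ρ·pad(M_RE) positive semidefinite, and j < k with standard basis vector e_j. Setting x := M⁻¹ e_j, one has (M⁻¹)_{jj} + xᵀ Q x ≤ ρ⁻¹·(M_RE⁻¹)_{jj}; in particular, if Q·(M⁻¹ e_j) ≠ 0, then (M⁻¹)_{jj} < ρ⁻¹·(M_RE⁻¹)_{jj}, corresponding to the strict variance inequality V(τ̂_RE) > V(τ̂) of Theorem 4(3). -/

import Mathlib

open Matrix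

/-- Strict efficiency gain. With `M_RE` positive definite `k×k`,
`ρ ∈ (0,1]`, `M` positive definite `(k+l)×(k+l)` and `Q := M − ρ·pad(M_RE)`
positive semidefinite, for `j < k` and `x := M⁻¹ e_j` one has
`(M⁻¹)_{jj} + xᵀQx ≤ ρ⁻¹ (M_RE⁻¹)_{jj}`; in particular, if `Q·(M⁻¹ e_j) ≠ 0`
then `(M⁻¹)_{jj} < ρ⁻¹ (M_RE⁻¹)_{jj}`. -/
theorem strict_efficiency_gain {k l : ℕ}
    (MRE : Matrix (Fin k) (Fin k) ℝ) (hMRE : MRE.PosDef)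
    (ρ : ℝ) (hρ0 : 0 < ρ) (hρ1 : ρ ≤ 1)
    (M : Matrix (Fin k ⊕ Fin l) (Fin k ⊕ Fin l) ℝ) (hM : M.PosDef)
    (Q : Matrix (Fin k ⊕ Fin l) (Fin k ⊕ Fin l) ℝ)
    (hQ : Q = M - ρ • Matrix.fromBlocks MRE 0 0 0)
    (hQpsd : Q.PosSemidef)
    (j : Fin k) (x : Fin k ⊕ Fin l → ℝ)
    (hx : x = M⁻¹ *ᵥ Pi.single (Sum.inl j) 1) :
    M⁻¹ (Sum.inl j) (Sum.inl j) + x ⬝ᵥ (Q *ᵥ x) ≤ ρ⁻¹ * MRE⁻¹ j j ∧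
    (Q *ᵥ x ≠ 0 → M⁻¹ (Sum.inl j) (Sum.inl j) < ρ⁻¹ * MRE⁻¹ j j) := by
  have hMt : MREᵀ = MRE := by
    have := hMRE.isHermitian
    rwa [Matrix.IsHermitian, conjTranspose_eq_transpose_of_trivial] at this
  have hsym : ∀ u v : Fin k → ℝ, (MRE *ᵥ u) ⬝ᵥ v = u ⬝ᵥ (MRE *ᵥ v) := by
    intro u v
    rw [dotProduct_mulVec, ← mulVec_transpose, hMt]
  -- e and its restriction
  set e : Fin k ⊕ Fin l → ℝ := Pi.single (Sum.inl j) 1 with he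
  have hMx : M *ᵥ x = e := by
    rw [hx, mulVec_mulVec, Matrix.mul_nonsing_inv M (isUnit_iff_ne_zero.mpr hM.det_pos.ne'), one_mulVec]
  -- diagonal entries as vector entries
  have hm : M⁻¹ (Sum.inl j) (Sum.inl j) = x (Sum.inl j) := by
    rw [hx, he]; simp [mulVec_single]
  set y : Fin k → ℝ := x ∘ Sum.inl with hy
  set w : Fin k → ℝ := MRE⁻¹ *ᵥ Pi.single j 1 with hw
  have hwj : MRE⁻¹ j j = w j := by rw [hw]; simp [mulVec_single]
  have hMw : MRE *ᵥ w = Pi.single j 1 := by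
    rw [hw, mulVec_mulVec, Matrix.mul_nonsing_inv MRE (isUnit_iff_ne_zero.mpr hMRE.det_pos.ne'), one_mulVec]
  -- xᵀ M x = x (inl j)
  have hxMx : x ⬝ᵥ (M *ᵥ x) = x (Sum.inl j) := by
    rw [hMx, he, dotProduct_single, mul_one]
  -- the padded quadratic form equals the small one
  have hpad : x ⬝ᵥ ((Matrix.fromBlocks MRE 0 0 0 : Matrix (Fin k ⊕ Fin l) (Fin k ⊕ Fin l) ℝ) *ᵥ x)
      = y ⬝ᵥ (MRE *ᵥ y) := by
    have hxe : x = Sum.elim (x ∘ Sum.inl) (x ∘ Sum.inr) := (Sum.elim_comp_inl_inr x).symm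
    rw [hxe]
    rw [fromBlocks_mulVec, sumElim_dotProduct_sumElim]
    simp [hy]
  -- xᵀ Q x
  have hQx : x ⬝ᵥ (Q *ᵥ x) = x (Sum.inl j) - ρ * (y ⬝ᵥ (MRE *ᵥ y)) := by
    rw [hQ, sub_mulVec, dotProduct_sub, hxMx, smul_mulVec, dotProduct_smul, hpad,
      smul_eq_mul]
  -- y j = x (inl j)
  have hyj : y ⬝ᵥ (MRE *ᵥ w) = x (Sum.inl j) := by
    rw [hMw, dotProduct_single, mul_one, hy]; rfl
  have hwMw : w ⬝ᵥ (MRE *ᵥ w) = w j := by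
    rw [hMw, dotProduct_single, mul_one]
  -- completing the square
  set z : Fin k → ℝ := y - ρ⁻¹ • w with hz
  have hz0 : 0 ≤ z ⬝ᵥ (MRE *ᵥ z) := by
    have := hMRE.posSemidef.dotProduct_mulVec_nonneg z
    simpa using this
  have hexp : z ⬝ᵥ (MRE *ᵥ z)
      = y ⬝ᵥ (MRE *ᵥ y) - 2 * ρ⁻¹ * x (Sum.inl j) + ρ⁻¹ * ρ⁻¹ * w j := by
    have h1 : w ⬝ᵥ (MRE *ᵥ y) = x (Sum.inl j) := by
      rw [← hsym w y, dotProduct_comm]; exact hyj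
    simp only [hz, mulVec_sub, mulVec_smul, dotProduct_sub, sub_dotProduct,
      dotProduct_smul, smul_dotProduct, smul_eq_mul]
    rw [h1, hyj, hwMw]
    ring
  have key : x (Sum.inl j) + x ⬝ᵥ (Q *ᵥ x) ≤ ρ⁻¹ * w j := by
    have h := mul_nonneg hρ0.le hz0
    rw [hexp] at h
    have hρne : ρ ≠ 0 := ne_of_gt hρ0
    have hexpand : ρ * (y ⬝ᵥ (MRE *ᵥ y) - 2 * ρ⁻¹ * x (Sum.inl j) + ρ⁻¹ * ρ⁻¹ * w j)
        = ρ * (y ⬝ᵥ (MRE *ᵥ y)) - 2 * x (Sum.inl j) + ρ⁻¹ * w j := by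
      field_simp
    rw [hexpand] at h
    rw [hQx]
    linarith
  constructor
  · rw [hm, hwj]; exact key
  · intro hQxne
    have hQxpos : 0 < x ⬝ᵥ (Q *ᵥ x) := by
      have h0 : 0 ≤ x ⬝ᵥ (Q *ᵥ x) := by simpa using hQpsd.dotProduct_mulVec_nonneg x
      rcases h0.lt_or_eq with h | h
      · exact h
      · exfalso
        apply hQxne
        have := (hQpsd.dotProduct_mulVec_zero_iff x).mp (by simpa using h.symm)
        exact this
    rw [hm, hwj]
    linarith [key]
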